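/- (Cases 4b, 5b, 6 of the SP-WENO case analysis.) Assume Δz_{i+1/2} ≠ 0, θ_i^+ ≤ 1, and θ_{i+1}^- ≤ 1. Then for every choice of consistent weights (i.e. -3/8 ≤ C_1, C_2 ≤ 1/8), the sign-property constraint w̃_0(1 - θ_{i+1}^-) + w_1(1 - θ_i^+) ≥ 0 holds automatically, and hence ⟦z⟧_{i+1/2}·Δz_{i+1/2} ≥ 0. -/
import Mathlib

/-- Cases 4b, 5b, 6 of the SP-WENO case analysis: if
`Δz_{i+1/2} ≠ 0`, `θ⁺_i ≤ 1` and `θ⁻_{i+1} ≤ 1`, then for every choice of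
consistent weights (`-3/8 ≤ C₁, C₂ ≤ 1/8`) the sign-property constraint
`w̃₀(1 - θ⁻_{i+1}) + w₁(1 - θ⁺_i) ≥ 0` holds automatically, and hence
`⟦z⟧_{i+1/2}·Δz_{i+1/2} ≥ 0`. -/
theorem sp_weno_cases_4b_5b_6 (zm z0 z1 z2 C1 C2 : ℝ) (hΔ : z1 - z0 ≠ 0)
    (hθp : (z0 - zm)/(z1 - z0) ≤ 1) (hθm : (z2 - z1)/(z1 - z0) ≤ 1)
    (hC1l : -(3/8) ≤ C1) (hC1u : C1 ≤ 1/8)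
    (hC2l : -(3/8) ≤ C2) (hC2u : C2 ≤ 1/8) :
    (1/4 - 2*C2)*(1 - (z2 - z1)/(z1 - z0))
        + (1/4 - 2*C1)*(1 - (z0 - zm)/(z1 - z0)) ≥ 0 ∧
    (((1/4 - 2*C2)*(3*z1 - z2) + (3/4 + 2*C2)*(z0 + z1))/2
        - ((3/4 + 2*C1)*(z0 + z1) + (1/4 - 2*C1)*(3*z0 - zm))/2) * (z1 - z0) ≥ 0 := by
  have h0 : (0:ℝ) ≤ 1/4 - 2*C2 := by linarith
  have h1 : (0:ℝ) ≤ 1/4 - 2*C1 := by linarith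
  have h2 : (0:ℝ) ≤ 1 - (z2 - z1)/(z1 - z0) := by linarith
  have h3 : (0:ℝ) ≤ 1 - (z0 - zm)/(z1 - z0) := by linarith
  have S : (1/4 - 2*C2)*(1 - (z2 - z1)/(z1 - z0))
        + (1/4 - 2*C1)*(1 - (z0 - zm)/(z1 - z0)) ≥ 0 :=
    add_nonneg (mul_nonneg h0 h2) (mul_nonneg h1 h3)
  refine ⟨S, ?_⟩
  have key : (((1/4 - 2*C2)*(3*z1 - z2) + (3/4 + 2*C2)*(z0 + z1))/2
        - ((3/4 + 2*C1)*(z0 + z1) + (1/4 - 2*C1)*(3*z0 - zm))/2) * (z1 - z0)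
      = ((1/4 - 2*C2)*(1 - (z2 - z1)/(z1 - z0))
        + (1/4 - 2*C1)*(1 - (z0 - zm)/(z1 - z0))) * ((z1 - z0)^2/2) := by
    field_simp
    ring
  rw [key]
  positivity
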